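/- Let G be a finite group, p a prime, and P a normal p-subgroup of G. If G/C_G(P) is a p-group, then P is contained in the hypercenter of G (the last term of the upper central series of G). -/

import Mathlib

open Subgroup

/-- Centralizer of a normal subgroup is normal. -/
lemma centralizer_normal_of_normal {G : Type*} [Group G] (P : Subgroup G) (hPn : P.Normal) :
    (Subgroup.centralizer (P : Set G)).Normal := by
  constructor
  intro g hg h
  rw [Subgroup.mem_centralizer_iff] at hg ⊢
  intro k hk
  have hk' : h⁻¹ * k * h ∈ P := by
    have := hPn.conj_mem k hk h⁻¹
    simpa using this
  have := hg _ hk'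
  -- (h⁻¹kh) g = g (h⁻¹kh)  →  k (hgh⁻¹) = (hgh⁻¹) k
  have : h * ((h⁻¹ * k * h) * g) * h⁻¹ = h * (g * (h⁻¹ * k * h)) * h⁻¹ := by rw [this]
  group at this ⊢
  convert this using 1 <;> group

/-- Key step: if `P` is a nontrivial normal `p`-subgroup and `G ⧸ C_G(P)` is a `p`-group,
then `P ∩ Z(G)` is nontrivial. -/
lemma exists_center_inter (G : Type*) [Group G] [Finite G] (p : ℕ) (hp : p.Prime)
    (P : Subgroup G) (hPn : P.Normal) (hpP : IsPGroup p P)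
    [hC : (Subgroup.centralizer (P : Set G)).Normal]
    (hq : IsPGroup p (G ⧸ Subgroup.centralizer (P : Set G)))
    (hP : P ≠ ⊥) : ∃ x : G, x ∈ P ∧ x ∈ Subgroup.center G ∧ x ≠ 1 := by
  haveI : Fact p.Prime := ⟨hp⟩
  set C := Subgroup.centralizer (P : Set G) with hCdef
  -- the conjugation action of G on P kills C
  have hker : C ≤ (MulAut.conjNormal (H := P) : G →* MulAut P).ker := by
    intro c hc
    rw [MonoidHom.mem_ker]
    refine MulEquiv.ext fun x => Subtype.ext ?_
    have hcx := (Subgroup.mem_centralizer_iff.mp hc) (x : G) x.2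
    simp only [MulAut.conjNormal_apply, MulAut.one_apply]
    rw [← hcx]; group
  let ψ : (G ⧸ C) →* MulAut P := QuotientGroup.lift C _ hker
  letI : MulAction (G ⧸ C) P := MulAction.compHom P ψ
  have hsmul : ∀ (g : G) (x : P), ((QuotientGroup.mk g : G ⧸ C) • x : P) =
      ⟨g * x * g⁻¹, hPn.conj_mem _ x.2 g⟩ := by
    intro g x
    rfl
  have h1 : (1 : P) ∈ MulAction.fixedPoints (G ⧸ C) P := by
    intro q
    induction q using QuotientGroup.induction_on with
    | H g => rw [hsmul]; ext; simp
  have hdvd : p ∣ Nat.card P := by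
    obtain ⟨n, hn⟩ := IsPGroup.iff_card.mp hpP
    rcases n with _ | n
    · exfalso
      apply hP
      rw [← Subgroup.card_le_one_iff_eq_bot]
      simp [hn]
    · rw [hn]
      exact dvd_pow_self p n.succ_ne_zero
  obtain ⟨b, hb, hb1⟩ := hq.exists_fixed_point_of_prime_dvd_card_of_fixed_point P hdvd h1
  refine ⟨(b : G), b.2, ?_, ?_⟩
  · rw [Subgroup.mem_center_iff]
    intro g
    have := hb (QuotientGroup.mk g)
    rw [hsmul] at this
    have h2 : g * (b : G) * g⁻¹ = (b : G) := congrArg Subtype.val this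
    calc g * (b : G) = g * (b : G) * g⁻¹ * g := by group
      _ = (b : G) * g := by rw [h2]
  · intro h
    refine hb1 (Subtype.ext ?_).symm
    simp [h]

lemma aux_hyper : ∀ (N : ℕ) (G : Type) [Group G] [Finite G] (p : ℕ), p.Prime →
    ∀ (P : Subgroup G), P.Normal → IsPGroup p P →
    ∀ (_ : (Subgroup.centralizer (P : Set G)).Normal),
    IsPGroup p (G ⧸ Subgroup.centralizer (P : Set G)) →
    Nat.card P ≤ N →
    ∃ n : ℕ, P ≤ _root_.upperCentralSeries G n := by
  intro N
  induction N with
  | zero =>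
    intro G _ _ p hp P hPn hpP hC hq hcard
    exact absurd hcard (by simpa using Nat.card_pos.ne')
  | succ N ih =>
    intro G _ _ p hp P hPn hpP hC hq hcard
    by_cases hP : P = ⊥
    · exact ⟨0, by simp [hP]⟩
    obtain ⟨x, hxP, hxZ, hx1⟩ := exists_center_inter G p hp P hPn hpP hq hP
    -- pass to G ⧸ Z(G)
    set Z := Subgroup.center G
    let mk : G →* G ⧸ Z := QuotientGroup.mk' Z
    have hmks : Function.Surjective mk := QuotientGroup.mk'_surjective Z
    set P' : Subgroup (G ⧸ Z) := P.map mk with hP'def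
    have hP'n : P'.Normal := hPn.map mk hmks
    have hpP' : IsPGroup p P' := hpP.map mk
    haveI hC' : (Subgroup.centralizer (P' : Set (G ⧸ Z))).Normal :=
      centralizer_normal_of_normal P' hP'n
    -- G⧸Z ⧸ centralizer P' is a p-group
    have hq' : IsPGroup p ((G ⧸ Z) ⧸ Subgroup.centralizer (P' : Set (G ⧸ Z))) := by
      let f : G →* (G ⧸ Z) ⧸ Subgroup.centralizer (P' : Set (G ⧸ Z)) :=
        (QuotientGroup.mk' _).comp mk
      have hfker : Subgroup.centralizer (P : Set G) ≤ f.ker := by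
        intro c hc
        rw [MonoidHom.mem_ker]
        show QuotientGroup.mk (mk c) = 1
        rw [QuotientGroup.eq_one_iff]
        rw [Subgroup.mem_centralizer_iff]
        rintro _ ⟨h, hh, rfl⟩
        have := (Subgroup.mem_centralizer_iff.mp hc) h hh
        show mk h * mk c = mk c * mk h
        rw [← map_mul, ← map_mul, this]
      exact hq.of_surjective (QuotientGroup.lift _ f hfker)
        (by
          intro y
          obtain ⟨y', rfl⟩ := QuotientGroup.mk'_surjective _ y
          obtain ⟨g, rfl⟩ := hmks y'
          exact ⟨QuotientGroup.mk g, rfl⟩)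
    -- cardinality strictly decreases
    have hlt : Nat.card P' < Nat.card P := by
      let φ : P →* P' := mk.subgroupMap P
      have hφs : Function.Surjective φ := MonoidHom.subgroupMap_surjective mk P
      have hker_nt : Nontrivial φ.ker := by
        refine ⟨⟨⟨x, hxP⟩, ?_⟩, 1, ?_⟩
        · rw [MonoidHom.mem_ker]
          apply Subtype.ext
          show mk x = 1
          rw [QuotientGroup.mk'_apply, QuotientGroup.eq_one_iff]
          exact hxZ
        · intro h
          exact hx1 (congrArg (fun y => ((y : φ.ker) : P) : _ → G) h)
      have h1 : Nat.card P = Nat.card (P ⧸ φ.ker) * Nat.card φ.ker :=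
        Subgroup.card_eq_card_quotient_mul_card_subgroup φ.ker
      have h2 : Nat.card (P ⧸ φ.ker) = Nat.card P' :=
        Nat.card_congr (QuotientGroup.quotientKerEquivOfSurjective φ hφs).toEquiv
      have h3 : 1 < Nat.card φ.ker := Finite.one_lt_card_iff_nontrivial.mpr hker_nt
      have h4 : 0 < Nat.card P' := Nat.card_pos
      calc Nat.card P' = Nat.card P' * 1 := (mul_one _).symm
        _ < Nat.card P' * Nat.card φ.ker := by nlinarith
        _ = Nat.card P := by rw [h1, h2]
    obtain ⟨n, hn⟩ := ih (G ⧸ Z) p hp P' hP'n hpP' hC' hq' (by omega)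
    refine ⟨n + 1, ?_⟩
    have : P ≤ Subgroup.comap mk P' := Subgroup.le_comap_map mk P
    refine le_trans this (le_trans (Subgroup.comap_mono hn) ?_)
    exact (Subgroup.comap_upperCentralSeries_quotient_center n).le

theorem stmt_11 (G : Type) [Group G] [Finite G] (p : ℕ) (hp : p.Prime)
    (P : Subgroup G) (hPn : P.Normal) (hpP : IsPGroup p P)
    [(Subgroup.centralizer (P : Set G)).Normal]
    (hq : IsPGroup p (G ⧸ Subgroup.centralizer (P : Set G))) :
    ∃ n : ℕ, P ≤ _root_.upperCentralSeries G n :=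
  aux_hyper (Nat.card P) G p hp P hPn hpP ‹_› hq le_rfl
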